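/- arXiv:1107.1877 — 2 statements merged into one kernel-verified Lean document; each statement's English description precedes it below -/
import Mathlib

section
/- For the torus link T(2, 4k+2) (the (2, 4k+2)-torus link, i.e., the link denoted 4k+2 in Conway notation), the Jones polynomial factorizes nontrivially as a product of two non-unit Laurent polynomials, even though T(2, 4k+2) is a prime link. In particular, for k = 1 the Jones polynomial of the (2,6)-torus link factorizes. -/
open LaurentPolynomial

/-- The Jones polynomial of the `(2,n)`-torus link `T(2,n)` (the closure of the
2-braid `σ₁ⁿ`; `n` in Conway notation), written in the variable `s = t^{1/2}` (so
`t = T 2`).  It is computed from the skein relation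
`t⁻¹·V(T(2,n)) - t·V(T(2,n-2)) = (t^{1/2} - t^{-1/2})·V(T(2,n-1))`, i.e.
`V(T(2,n)) = t²·V(T(2,n-2)) + (t^{3/2} - t^{1/2})·V(T(2,n-1))`, starting from the
2-component unlink `T(2,0)` with `V = -t^{1/2} - t^{-1/2}` and the unknot `T(2,1)`
with `V = 1`. -/
noncomputable def torusJones : ℕ → LaurentPolynomial ℤ
  | 0 => -T 1 - T (-1)
  | 1 => 1
  | (n + 2) => T 4 * torusJones n + (T 3 - T 1) * torusJones (n + 1)

noncomputable def hh : ℕ → LaurentPolynomial ℤ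
  | 0 => 1
  | (k + 1) => hh k + T 1 ^ (8 * k + 8) - T 1 ^ (8 * k + 6)

-- Gaussian integer i, as a unit
def iiU : GaussianIntˣ :=
  ⟨⟨0, 1⟩, ⟨0, -1⟩, by ext <;> simp [Zsqrtd.re_mul, Zsqrtd.im_mul],
    by ext <;> simp [Zsqrtd.re_mul, Zsqrtd.im_mul]⟩

noncomputable def phi : LaurentPolynomial ℤ →ₐ[ℤ] GaussianInt :=
  AddMonoidAlgebra.lift ℤ GaussianInt ℤ
    ((Units.coeHom GaussianInt).comp (zpowersHom GaussianIntˣ iiU))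

lemma phi_T (n : ℤ) : phi (T n) = ((iiU ^ n : GaussianIntˣ) : GaussianInt) := by
  have : (T n : LaurentPolynomial ℤ) = AddMonoidAlgebra.single n 1 := rfl
  rw [phi, this, AddMonoidAlgebra.lift_single]
  simp [zpowersHom]

lemma phi_T1 : phi (T 1) = (⟨0, 1⟩ : GaussianInt) := by
  rw [phi_T]; norm_num; rfl

def ii : GaussianInt := ⟨0, 1⟩

lemma ii_sq : ii ^ 2 = -1 := by
  ext <;> simp [ii, sq, Zsqrtd.re_mul, Zsqrtd.im_mul]

lemma ii_pow4 : ii ^ 4 = 1 := by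
  have : ii ^ 4 = (ii ^ 2) ^ 2 := by ring
  rw [this, ii_sq]; ring

lemma phi_hh (k : ℕ) : phi (hh k) = ((1 + 2 * k : ℤ) : GaussianInt) := by
  induction k with
  | zero => simp [hh]
  | succ k ih =>
      have h8 : phi (T 1) ^ (8 * k + 8) = 1 := by
        rw [phi_T1, show (⟨0,1⟩ : GaussianInt) = ii from rfl,
          show 8 * k + 8 = 4 * (2 * k + 2) by ring, pow_mul, ii_pow4, one_pow]
      have h6 : phi (T 1) ^ (8 * k + 6) = -1 := by
        rw [phi_T1, show (⟨0,1⟩ : GaussianInt) = ii from rfl,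
          show 8 * k + 6 = 2 * (4 * k + 3) by ring, pow_mul, ii_sq,
          show (4 * k + 3) = 2 * (2 * k + 1) + 1 by ring, pow_succ, pow_mul]
        norm_num
      simp only [hh, map_sub, map_add, map_pow, h8, h6, ih]
      push_cast
      ring

lemma norm_ii : Zsqrtd.norm ii = 1 := by simp [ii, Zsqrtd.norm]

lemma not_unit_f : ¬ IsUnit ((T 1 : LaurentPolynomial ℤ) ^ 4 + 1) := by
  intro h
  have h2 : IsUnit (phi ((T 1 : LaurentPolynomial ℤ) ^ 4 + 1)) := h.map phi
  rw [map_add, map_pow, map_one, phi_T1,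
    show (⟨0,1⟩ : GaussianInt) = ii from rfl, ii_pow4] at h2
  have := (Zsqrtd.norm_eq_one_iff' (by norm_num) _).mpr h2
  rw [show ((1 : GaussianInt) + 1) = ((2 : ℤ) : GaussianInt) by push_cast; ring,
    Zsqrtd.norm_intCast] at this
  norm_num at this

lemma not_unit_g (k : ℕ) (hk : 1 ≤ k) :
    ¬ IsUnit (-(T 1 : LaurentPolynomial ℤ) ^ (4 * k + 1) * hh k) := by
  intro h
  have h2 : IsUnit (phi (-(T 1 : LaurentPolynomial ℤ) ^ (4 * k + 1) * hh k)) := h.map phi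
  rw [map_mul, map_neg, map_pow, phi_T1, show (⟨0,1⟩ : GaussianInt) = ii from rfl,
    phi_hh, show 4 * k + 1 = 4 * k + 1 from rfl,
    show ii ^ (4 * k + 1) = ii by
      rw [pow_succ, pow_mul, ii_pow4, one_pow, one_mul]] at h2
  have := (Zsqrtd.norm_eq_one_iff' (by norm_num) _).mpr h2
  rw [Zsqrtd.norm_mul, Zsqrtd.norm_neg, norm_ii, Zsqrtd.norm_intCast, one_mul] at this
  nlinarith [Int.natCast_pos.mpr (Nat.lt_of_lt_of_le Nat.zero_lt_one hk), this]

noncomputable def psi : LaurentPolynomial ℤ →ₐ[ℤ] ℤ :=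
  AddMonoidAlgebra.lift ℤ ℤ ℤ 1

lemma psi_T1 : psi (T 1) = 1 := by
  have : (T 1 : LaurentPolynomial ℤ) = AddMonoidAlgebra.single (1 : ℤ) 1 := rfl
  rw [psi, this, AddMonoidAlgebra.lift_single]
  simp

lemma factor_ne : ((T 1 : LaurentPolynomial ℤ) ^ 2 + 1) * T 1 ≠ 0 := by
  apply mul_ne_zero
  · intro h
    have := congrArg psi h
    rw [map_add, map_pow, map_one, map_zero, psi_T1] at this
    norm_num at this
  · exact (isUnit_T 1).ne_zero

lemma hT2 : (T 2 : LaurentPolynomial ℤ) = T 1 ^ 2 := by rw [T_pow]; norm_num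
lemma hT3 : (T 3 : LaurentPolynomial ℤ) = T 1 ^ 3 := by rw [T_pow]; norm_num
lemma hT4 : (T 4 : LaurentPolynomial ℤ) = T 1 ^ 4 := by rw [T_pow]; norm_num
lemma hT0 : (T 1 : LaurentPolynomial ℤ) * T (-1) = 1 := by rw [← T_add]; norm_num

lemma key : ∀ n : ℕ, (T 1 ^ 2 + 1) * T 1 * torusJones n
    = (-1) ^ (n + 1) * (T 1 ^ (n + 4) + T 1 ^ (n + 2) + T 1 ^ n) - T 1 ^ (3 * n + 2)
  | 0 => by
      simp only [torusJones]
      have h0 := hT0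
      set x := (T 1 : LaurentPolynomial ℤ)
      set y := (T (-1) : LaurentPolynomial ℤ)
      linear_combination (-(x ^ 2 + 1)) * h0
  | 1 => by
      simp only [torusJones]
      set x := (T 1 : LaurentPolynomial ℤ)
      ring
  | (n + 2) => by
      have ih1 := key n
      have ih2 := key (n + 1)
      simp only [torusJones, hT2, hT3, hT4] at *
      set x := (T 1 : LaurentPolynomial ℤ)
      linear_combination x ^ 4 * ih1 + (x ^ 3 - x) * ih2

lemma keyR : ∀ k : ℕ, (T 1 ^ 2 + 1) * (T 1 ^ 4 + 1) * hh k * T 1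
    = T 1 ^ 5 + T 1 ^ 3 + T 1 + T 1 ^ (8 * k + 7)
  | 0 => by simp only [hh]; set x := (T 1 : LaurentPolynomial ℤ); ring
  | (k + 1) => by
      have ih := keyR k
      simp only [hh] at *
      set x := (T 1 : LaurentPolynomial ℤ)
      linear_combination ih

lemma fact (k : ℕ) :
    torusJones (4 * k + 2) = ((T 1 : LaurentPolynomial ℤ) ^ 4 + 1) *
      (-(T 1 : LaurentPolynomial ℤ) ^ (4 * k + 1) * hh k) := by
  apply mul_left_cancel₀ factor_ne
  have hk := key (4 * k + 2)
  have hodd : ((-1 : LaurentPolynomial ℤ)) ^ (4 * k + 2 + 1) = -1 :=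
    Odd.neg_one_pow ⟨2 * k + 1, by ring⟩
  rw [hodd] at hk
  have hr := keyR k
  set x := (T 1 : LaurentPolynomial ℤ)
  linear_combination hk + x ^ (4 * k + 1) * hr

/-- For every `k ≥ 1` the Jones polynomial of the 2-component prime torus link
`T(2, 4k+2)` (the link family `6, 10, …, 4k+2`) factorizes nontrivially as a product
of two Laurent polynomials neither of which is a unit `±tᵏ`; in particular this holds
for `k = 1`, the `(2,6)`-torus link. -/
theorem torus_jones_factorizes :
    (∀ k : ℕ, 1 ≤ k → ∃ f g : LaurentPolynomial ℤ,
      torusJones (4 * k + 2) = f * g ∧ ¬ IsUnit f ∧ ¬ IsUnit g) ∧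
    (∃ f g : LaurentPolynomial ℤ,
      torusJones 6 = f * g ∧ ¬ IsUnit f ∧ ¬ IsUnit g) := by
  have main : ∀ k : ℕ, 1 ≤ k → ∃ f g : LaurentPolynomial ℤ,
      torusJones (4 * k + 2) = f * g ∧ ¬ IsUnit f ∧ ¬ IsUnit g := by
    intro k hk
    exact ⟨_, _, fact k, not_unit_f, not_unit_g k hk⟩
  refine ⟨main, ?_⟩
  have := main 1 le_rfl
  norm_num at this ⊢
  exact this
end

section
/- The Tutte polynomial of a connected matroid is irreducible in ℤ[x, y] (Brylawski's theorem). In particular, the Tutte polynomial of a 2-connected graph is irreducible. -/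
open MvPolynomial

/-- The Tutte polynomial of a matroid with finite ground set `E` and rank function `r`:
`T_M(x, y) = Σ_{A ⊆ E} (x-1)^{r(E) - r(A)} (y-1)^{|A| - r(A)}`, as an element of
`ℤ[x, y] = MvPolynomial (Fin 2) ℤ` (with `x = X 0`, `y = X 1`). -/
noncomputable def tuttePoly {α : Type} [DecidableEq α] (E : Finset α) (r : Finset α → ℕ) :
    MvPolynomial (Fin 2) ℤ :=
  ∑ A ∈ E.powerset, (X 0 - 1) ^ (r E - r A) * (X 1 - 1) ^ (A.card - r A)

/-- A matroid (given by its rank function on a finite ground set) is connected if it is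
not the direct sum of two matroids on nonempty ground sets. -/
def MatroidConnected {α : Type} [DecidableEq α] (E : Finset α) (r : Finset α → ℕ) : Prop :=
  ¬ ∃ E₁ E₂ : Finset α, E₁ ∪ E₂ = E ∧ Disjoint E₁ E₂ ∧ E₁.Nonempty ∧ E₂.Nonempty ∧
      ∀ A ⊆ E, r A = r (A ∩ E₁) + r (A ∩ E₂)

namespace TutteAux

variable {α : Type} [DecidableEq α]

variable {r : Finset α → ℕ} {E s : Finset α} {e : α}

/-- contraction of the element `e` -/
def ctr (r : Finset α → ℕ) (e : α) : Finset α → ℕ := fun A => r (insert e A) - 1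


structure IsRank (r : Finset α → ℕ) : Prop where
  empty : r ∅ = 0
  le_card : ∀ A : Finset α, r A ≤ A.card
  mono : ∀ ⦃A B : Finset α⦄, A ⊆ B → r A ≤ r B
  submod : ∀ A B : Finset α, r (A ∪ B) + r (A ∩ B) ≤ r A + r B

/-- no separator -/
def NoSep (E : Finset α) (r : Finset α → ℕ) : Prop :=
  ∀ E₁ E₂ : Finset α, E₁ ∪ E₂ = E → Disjoint E₁ E₂ → E₁.Nonempty → E₂.Nonempty →
    r E₁ + r E₂ ≠ r E


lemma IsRank.subadd (h : IsRank r) (A B : Finset α) : r (A ∪ B) ≤ r A + r B := by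
  have := h.submod A B; omega

lemma IsRank.r_singleton_le (h : IsRank r) (e : α) : r {e} ≤ 1 := by
  simpa using h.le_card {e}

/-- rank can drop by at most the number of removed elements -/
lemma IsRank.le_add_card (h : IsRank r) {A B : Finset α} (hAB : A ⊆ B) :
    r B ≤ r A + (B \ A).card := by
  have h1 : A ∪ (B \ A) = B := Finset.union_sdiff_of_subset hAB
  calc r B = r (A ∪ (B \ A)) := by rw [h1]
    _ ≤ r A + r (B \ A) := h.subadd _ _
    _ ≤ r A + (B \ A).card := by have := h.le_card (B \ A); omega

lemma IsRank.nullity_mono (h : IsRank r) {A B : Finset α} (hAB : A ⊆ B) :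
    r B + A.card ≤ r A + B.card := by
  have h2 := h.le_add_card hAB
  have h3 : (B \ A).card = B.card - A.card := Finset.card_sdiff_of_subset hAB
  have h4 : A.card ≤ B.card := Finset.card_le_card hAB
  omega

lemma noSep_of_connected (h : IsRank r) (hconn : MatroidConnected E r) : NoSep E r := by
  intro E₁ E₂ hu hd h1 h2 hsum
  apply hconn
  refine ⟨E₁, E₂, hu, hd, h1, h2, fun A hA => ?_⟩
  have hle : r A ≤ r (A ∩ E₁) + r (A ∩ E₂) := by
    have : (A ∩ E₁) ∪ (A ∩ E₂) = A := by
      rw [← Finset.inter_union_distrib_left, hu]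
      exact Finset.inter_eq_left.mpr hA
    calc r A = r ((A ∩ E₁) ∪ (A ∩ E₂)) := by rw [this]
      _ ≤ _ := h.subadd _ _
  have hge : r (A ∩ E₁) + r (A ∩ E₂) ≤ r A := by
    have s1 := h.submod A E₁
    have s2 := h.submod (A ∪ E₁) E₂
    have e1 : A ∪ E₁ ∪ E₂ = E := by
      rw [Finset.union_assoc, hu]
      exact Finset.union_eq_right.mpr hA
    have e2 : (A ∪ E₁) ∩ E₂ = A ∩ E₂ := by
      rw [Finset.union_inter_distrib_right]
      have : E₁ ∩ E₂ = ∅ := Finset.disjoint_iff_inter_eq_empty.mp hd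
      rw [this, Finset.union_empty]
    rw [e1, e2] at s2
    omega
  omega

lemma NoSep.lb (h : IsRank r) (hc : NoSep E r) {A : Finset α} (hA : A ⊆ E)
    (h1 : A.Nonempty) (h2 : (E \ A).Nonempty) : r E + 1 ≤ r A + r (E \ A) := by
  have hu : A ∪ (E \ A) = E := Finset.union_sdiff_of_subset hA
  have hd : Disjoint A (E \ A) := Finset.disjoint_sdiff
  have hne := hc A (E \ A) hu hd h1 h2
  have : r E ≤ r A + r (E \ A) := by
    calc r E = r (A ∪ (E \ A)) := by rw [hu]
      _ ≤ _ := h.subadd _ _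
  omega

/-- in a connected matroid with ≥ 2 elements there are no loops and no coloops -/
lemma NoSep.no_loop_coloop (h : IsRank r) (hc : NoSep E r) (hcard : 2 ≤ E.card)
    {e : α} (he : e ∈ E) : r {e} = 1 ∧ r (E.erase e) = r E := by
  have herase : E.erase e ⊆ E := Finset.erase_subset _ _
  have hne : (E.erase e).Nonempty := by
    rw [← Finset.card_pos, Finset.card_erase_of_mem he]; omega
  have hu : {e} ∪ E.erase e = E := by
    rw [← Finset.insert_eq, Finset.insert_erase he]
  have hd : Disjoint ({e} : Finset α) (E.erase e) := by
    simp [Finset.disjoint_singleton_left]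
  have hsub : r E ≤ r {e} + r (E.erase e) := by
    calc r E = r ({e} ∪ E.erase e) := by rw [hu]
      _ ≤ _ := h.subadd _ _
  have hmono : r (E.erase e) ≤ r E := h.mono herase
  have hns := hc {e} (E.erase e) hu hd (Finset.singleton_nonempty e) hne
  have h1 : r {e} ≤ 1 := h.r_singleton_le e
  constructor
  · omega
  · omega






lemma one_le_r_insert (h : IsRank r) (he1 : r {e} = 1) (A : Finset α) :
    1 ≤ r (insert e A) := by
  have : ({e} : Finset α) ⊆ insert e A := by
    intro x hx; simp at hx; simp [hx]
  have := h.mono this; omega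

lemma ctr_isRank (h : IsRank r) {e : α} (he1 : r {e} = 1) : IsRank (ctr r e) := by
  constructor
  · show r (insert e ∅) - 1 = 0
    have h0 : insert e (∅ : Finset α) = {e} := by simp
    rw [h0, he1]
  · intro A
    show r (insert e A) - 1 ≤ A.card
    have h1 : r (insert e A) ≤ r {e} + r A := by
      have h2 : insert e A = {e} ∪ A := by rw [Finset.insert_eq]
      rw [h2]; exact h.subadd _ _
    have := h.le_card A; omega
  · intro A B hAB
    have : insert e A ⊆ insert e B := Finset.insert_subset_insert _ hAB
    have := h.mono this
    show r (insert e A) - 1 ≤ r (insert e B) - 1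
    omega
  · intro A B
    have key := h.submod (insert e A) (insert e B)
    have e1 : insert e A ∪ insert e B = insert e (A ∪ B) := by
      ext x
      simp only [Finset.mem_union, Finset.mem_insert, Finset.mem_inter]
      tauto
    have e2 : insert e A ∩ insert e B = insert e (A ∩ B) := by
      ext x
      simp only [Finset.mem_union, Finset.mem_insert, Finset.mem_inter]
      tauto
    rw [e1, e2] at key
    have g1 := one_le_r_insert h he1 (A ∪ B)
    have g2 := one_le_r_insert h he1 (A ∩ B)
    show r (insert e (A ∪ B)) - 1 + (r (insert e (A ∩ B)) - 1) ≤
      (r (insert e A) - 1) + (r (insert e B) - 1)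
    have g3 := one_le_r_insert h he1 A
    have g4 := one_le_r_insert h he1 B
    omega

/-- Tutte's lemma: for a connected matroid, deletion or contraction of e is connected. -/
lemma noSep_del_or_ctr (h : IsRank r) {e : α} (he : e ∈ E)
    (he1 : r {e} = 1) (he2 : r (E.erase e) = r E) (hc : NoSep E r) :
    NoSep (E.erase e) r ∨ NoSep (E.erase e) (ctr r e) := by
  by_contra hcon
  push_neg at hcon
  obtain ⟨hdel, hctr⟩ := hcon
  rw [NoSep] at hdel hctr
  push_neg at hdel hctr
  obtain ⟨A, B, hABu, hABd, hAne, hBne, hABr⟩ := hdel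
  obtain ⟨C, D, hCDu, hCDd, hCne, hDne, hCDr⟩ := hctr
  rw [he2] at hABr
  -- from the contraction separator
  have hCDr' : r (insert e C) + r (insert e D) = r E + 1 := by
    have hC1 : 1 ≤ r (insert e C) := one_le_r_insert h he1 C
    have hD1 : 1 ≤ r (insert e D) := one_le_r_insert h he1 D
    have hE' : insert e (E.erase e) = E := Finset.insert_erase he
    have : ctr r e C + ctr r e D = ctr r e (E.erase e) := hCDr
    simp only [ctr] at this
    rw [hE'] at this
    have hre : 1 ≤ r E := by
      have : ({e} : Finset α) ⊆ E := by simpa using he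
      have := h.mono this; omega
    omega
  -- key claim, for any contraction separator (C,D)
  have claim : ∀ C D : Finset α, C ∪ D = E.erase e → Disjoint C D →
      r (insert e C) + r (insert e D) = r E + 1 → (A ∩ C = ∅ ∨ B ∩ D = ∅) := by
    intro C D hCDu hCDd hCDr'
    by_contra hcc
    push_neg at hcc
    obtain ⟨hAC, hBD⟩ := hcc
    have hACne : (A ∩ C).Nonempty := hAC
    have hBDne : (B ∩ D).Nonempty := hBD
    -- memberships
    have hAmem : ∀ x, x ∈ A → x ∈ E ∧ x ≠ e := by
      intro x hx
      have : x ∈ E.erase e := hABu ▸ Finset.mem_union_left _ hx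
      exact ⟨Finset.mem_of_mem_erase this, Finset.ne_of_mem_erase this⟩
    have hBmem : ∀ x, x ∈ B → x ∈ E ∧ x ≠ e := by
      intro x hx
      have : x ∈ E.erase e := hABu ▸ Finset.mem_union_right _ hx
      exact ⟨Finset.mem_of_mem_erase this, Finset.ne_of_mem_erase this⟩
    -- complement identities
    have hcomp1 : E \ (A ∩ C) = (insert e D) ∪ B := by
      ext x
      simp only [Finset.mem_sdiff, Finset.mem_inter, Finset.mem_union, Finset.mem_insert]
      constructor
      · rintro ⟨hxE, hx⟩
        by_cases hxe : x = e
        · tauto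
        · have hx1 : x ∈ E.erase e := Finset.mem_erase.mpr ⟨hxe, hxE⟩
          have hx2 : x ∈ A ∪ B := hABu ▸ hx1
          have hx3 : x ∈ C ∪ D := hCDu ▸ hx1
          simp only [Finset.mem_union] at hx2 hx3
          rcases hx2 with h2 | h2
          · rcases hx3 with h3 | h3
            · exact absurd ⟨h2, h3⟩ hx
            · tauto
          · tauto
      · rintro ((rfl | hx) | hx)
        · refine ⟨he, ?_⟩
          rintro ⟨hxA, -⟩
          exact (hAmem _ hxA).2 rfl
        · have hxE : x ∈ E.erase e := hCDu ▸ Finset.mem_union_right _ hx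
          refine ⟨Finset.mem_of_mem_erase hxE, ?_⟩
          rintro ⟨-, hxC⟩
          exact (Finset.disjoint_left.mp hCDd hxC) hx
        · refine ⟨(hBmem _ hx).1, ?_⟩
          rintro ⟨hxA, -⟩
          exact (Finset.disjoint_left.mp hABd hxA) hx
    have hcomp2 : E \ (B ∩ D) = (insert e C) ∪ A := by
      ext x
      simp only [Finset.mem_sdiff, Finset.mem_inter, Finset.mem_union, Finset.mem_insert]
      constructor
      · rintro ⟨hxE, hx⟩
        by_cases hxe : x = e
        · tauto
        · have hx1 : x ∈ E.erase e := Finset.mem_erase.mpr ⟨hxe, hxE⟩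
          have hx2 : x ∈ A ∪ B := hABu ▸ hx1
          have hx3 : x ∈ C ∪ D := hCDu ▸ hx1
          simp only [Finset.mem_union] at hx2 hx3
          tauto
      · rintro ((rfl | hx) | hx)
        · refine ⟨he, ?_⟩
          rintro ⟨hxB, -⟩
          exact (hBmem _ hxB).2 rfl
        · have hxE : x ∈ E.erase e := hCDu ▸ Finset.mem_union_left _ hx
          refine ⟨Finset.mem_of_mem_erase hxE, ?_⟩
          rintro ⟨hxB, hxD⟩
          exact (Finset.disjoint_left.mp hCDd hx) hxD
        · refine ⟨(hAmem _ hx).1, ?_⟩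
          rintro ⟨hxB, -⟩
          exact (Finset.disjoint_left.mp hABd hx) hxB
    -- submodularity
    have s1 := h.submod A (insert e C)
    have s2 := h.submod B (insert e D)
    have i1 : A ∩ insert e C = A ∩ C := by
      ext x
      simp only [Finset.mem_inter, Finset.mem_insert]
      constructor
      · rintro ⟨hxA, rfl | hxC⟩
        · exact absurd rfl (hAmem _ hxA).2
        · exact ⟨hxA, hxC⟩
      · tauto
    have i2 : B ∩ insert e D = B ∩ D := by
      ext x
      simp only [Finset.mem_inter, Finset.mem_insert]
      constructor
      · rintro ⟨hxB, rfl | hxD⟩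
        · exact absurd rfl (hBmem _ hxB).2
        · exact ⟨hxB, hxD⟩
      · tauto
    have u1 : A ∪ insert e C = insert e C ∪ A := Finset.union_comm _ _
    have u2 : B ∪ insert e D = insert e D ∪ B := Finset.union_comm _ _
    rw [i1, u1] at s1
    rw [i2, u2] at s2
    -- connectivity lower bounds
    have hACsub : A ∩ C ⊆ E := fun x hx =>
      (hAmem x (Finset.mem_of_mem_inter_left hx)).1
    have hBDsub : B ∩ D ⊆ E := fun x hx =>
      (hBmem x (Finset.mem_of_mem_inter_left hx)).1
    have lb1 := NoSep.lb h hc hACsub hACne (by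
      rw [hcomp1]
      exact ⟨e, by simp⟩)
    have lb2 := NoSep.lb h hc hBDsub hBDne (by
      rw [hcomp2]
      exact ⟨e, by simp⟩)
    rw [hcomp1] at lb1
    rw [hcomp2] at lb2
    omega
  have c1 := claim C D hCDu hCDd hCDr'
  have c2 := claim D C (by rw [Finset.union_comm]; exact hCDu) hCDd.symm (by omega)
  -- now a case analysis: some of A,B,C,D is empty
  have hsplit : ∀ (X Y Z : Finset α), X ⊆ Y ∪ Z → X ∩ Y = ∅ → X ∩ Z = ∅ → X = ∅ := by
    intro X Y Z hs h1 h2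
    ext x
    simp only [Finset.notMem_empty, iff_false]
    intro hx
    have := hs hx
    simp only [Finset.mem_union] at this
    rcases this with h' | h'
    · exact absurd (Finset.mem_inter.mpr ⟨hx, h'⟩) (by simp [h1])
    · exact absurd (Finset.mem_inter.mpr ⟨hx, h'⟩) (by simp [h2])
  have hAsub : A ⊆ C ∪ D := by rw [hCDu, ← hABu]; exact Finset.subset_union_left
  have hBsub : B ⊆ C ∪ D := by rw [hCDu, ← hABu]; exact Finset.subset_union_right
  have hCsub : C ⊆ A ∪ B := by rw [hABu, ← hCDu]; exact Finset.subset_union_left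
  have hDsub : D ⊆ A ∪ B := by rw [hABu, ← hCDu]; exact Finset.subset_union_right
  rcases c1 with h1 | h1 <;> rcases c2 with h2 | h2
  · -- A∩C = ∅, A∩D = ∅ → A = ∅
    exact absurd (hsplit A C D hAsub h1 h2) (Finset.nonempty_iff_ne_empty.mp hAne)
  · -- A∩C = ∅, B∩C = ∅ → C = ∅
    have := hsplit C A B hCsub (by rw [Finset.inter_comm]; exact h1)
      (by rw [Finset.inter_comm]; exact h2)
    exact absurd this (Finset.nonempty_iff_ne_empty.mp hCne)
  · -- B∩D = ∅, A∩D = ∅ → D = ∅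
    have := hsplit D A B hDsub (by rw [Finset.inter_comm]; exact h2)
      (by rw [Finset.inter_comm]; exact h1)
    exact absurd this (Finset.nonempty_iff_ne_empty.mp hDne)
  · -- B∩D = ∅, B∩C = ∅ → B = ∅
    exact absurd (hsplit B C D hBsub h2 h1) (Finset.nonempty_iff_ne_empty.mp hBne)





lemma sum_powerset_insert' {β : Type*} [AddCommMonoid β] (he : e ∉ s) (f : Finset α → β) :
    ∑ A ∈ (insert e s).powerset, f A
      = ∑ A ∈ s.powerset, f A + ∑ A ∈ s.powerset, f (insert e A) := by
  rw [Finset.powerset_insert]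
  rw [Finset.sum_union]
  · congr 1
    rw [Finset.sum_image]
    intro A hA B hB hAB
    have hA' : A ⊆ s := Finset.mem_powerset.mp hA
    have hB' : B ⊆ s := Finset.mem_powerset.mp hB
    have heA : e ∉ A := fun hx => he (hA' hx)
    have heB : e ∉ B := fun hx => he (hB' hx)
    have : (insert e A).erase e = (insert e B).erase e := by rw [hAB]
    rwa [Finset.erase_insert heA, Finset.erase_insert heB] at this
  · rw [Finset.disjoint_left]
    intro A hA hA2
    simp only [Finset.mem_image] at hA2
    obtain ⟨B, hB, rfl⟩ := hA2
    have : e ∈ s := Finset.mem_powerset.mp hA (Finset.mem_insert_self e B)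
    exact he this

lemma r_insert_of_loop (h : IsRank r) (he0 : r {e} = 0) (A : Finset α) :
    r (insert e A) = r A := by
  have h1 : r (insert e A) ≤ r {e} + r A := by
    rw [Finset.insert_eq]; exact h.subadd _ _
  have h2 : r A ≤ r (insert e A) := h.mono (Finset.subset_insert _ _)
  omega

lemma tutte_empty (h : IsRank r) : tuttePoly (∅ : Finset α) r = 1 := by
  rw [tuttePoly, Finset.powerset_empty, Finset.sum_singleton]
  simp

lemma tutte_loop (h : IsRank r) (he : e ∉ s) (he0 : r {e} = 0) :
    tuttePoly (insert e s) r = X 1 * tuttePoly s r := by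
  rw [tuttePoly, sum_powerset_insert' he]
  have hrs : r (insert e s) = r s := r_insert_of_loop h he0 s
  have step1 : ∑ A ∈ s.powerset,
      (X 0 - 1) ^ (r (insert e s) - r A) * (X 1 - 1) ^ (A.card - r A)
      = tuttePoly s r := by
    rw [tuttePoly, hrs]
  have step2 : ∑ A ∈ s.powerset,
      (X 0 - 1) ^ (r (insert e s) - r (insert e A)) *
        (X 1 - 1) ^ ((insert e A).card - r (insert e A))
      = (X 1 - 1) * tuttePoly s r := by
    rw [tuttePoly, Finset.mul_sum]
    refine Finset.sum_congr rfl (fun A hA => ?_)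
    have hAs : A ⊆ s := Finset.mem_powerset.mp hA
    have heA : e ∉ A := fun hx => he (hAs hx)
    have h1 : r (insert e A) = r A := r_insert_of_loop h he0 A
    have h2 : (insert e A).card = A.card + 1 := Finset.card_insert_of_notMem heA
    have h3 : r A ≤ A.card := h.le_card A
    rw [h1, h2, hrs, show A.card + 1 - r A = (A.card - r A) + 1 by omega, pow_succ]
    ring
  rw [step1, step2]
  ring

lemma tutte_coloop (h : IsRank r) (he : e ∉ s) (he1 : r {e} = 1)
    (hrs : r (insert e s) = r s + 1) :
    tuttePoly (insert e s) r = X 0 * tuttePoly s r := by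
  rw [tuttePoly, sum_powerset_insert' he]
  have key : ∀ A : Finset α, A ⊆ s → r (insert e A) = r A + 1 := by
    intro A hAs
    have h1 : r (insert e A) ≤ r {e} + r A := by
      rw [Finset.insert_eq]; exact h.subadd _ _
    have h2 := h.submod (insert e A) s
    have e1 : insert e A ∪ s = insert e s := by
      ext x
      simp only [Finset.mem_union, Finset.mem_insert]
      constructor
      · rintro ((rfl | hx) | hx)
        · exact Or.inl rfl
        · exact Or.inr (hAs hx)
        · exact Or.inr hx
      · rintro (rfl | hx)
        · exact Or.inl (Or.inl rfl)
        · exact Or.inr hx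
    have e2 : insert e A ∩ s = A := by
      ext x
      simp only [Finset.mem_inter, Finset.mem_insert]
      constructor
      · rintro ⟨rfl | hx, hxs⟩
        · exact absurd hxs he
        · exact hx
      · intro hx
        exact ⟨Or.inr hx, hAs hx⟩
    rw [e1, e2, hrs] at h2
    omega
  have step1 : ∑ A ∈ s.powerset,
      (X 0 - 1) ^ (r (insert e s) - r A) * (X 1 - 1) ^ (A.card - r A)
      = (X 0 - 1) * tuttePoly s r := by
    rw [tuttePoly, Finset.mul_sum]
    refine Finset.sum_congr rfl (fun A hA => ?_)
    have hAs : A ⊆ s := Finset.mem_powerset.mp hA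
    have h3 : r A ≤ r s := h.mono hAs
    rw [hrs, show r s + 1 - r A = (r s - r A) + 1 by omega, pow_succ]
    ring
  have step2 : ∑ A ∈ s.powerset,
      (X 0 - 1) ^ (r (insert e s) - r (insert e A)) *
        (X 1 - 1) ^ ((insert e A).card - r (insert e A))
      = tuttePoly s r := by
    rw [tuttePoly]
    refine Finset.sum_congr rfl (fun A hA => ?_)
    have hAs : A ⊆ s := Finset.mem_powerset.mp hA
    have heA : e ∉ A := fun hx => he (hAs hx)
    have h1 := key A hAs
    have h2 : (insert e A).card = A.card + 1 := Finset.card_insert_of_notMem heA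
    rw [h1, h2, hrs, show r s + 1 - (r A + 1) = r s - r A by omega,
      show A.card + 1 - (r A + 1) = A.card - r A by omega]
  rw [step1, step2]
  ring

lemma tutte_delContr (h : IsRank r) (he : e ∉ s) (he1 : r {e} = 1)
    (hrs : r (insert e s) = r s) :
    tuttePoly (insert e s) r = tuttePoly s r + tuttePoly s (ctr r e) := by
  rw [tuttePoly, sum_powerset_insert' he]
  have step1 : ∑ A ∈ s.powerset,
      (X 0 - 1) ^ (r (insert e s) - r A) * (X 1 - 1) ^ (A.card - r A)
      = tuttePoly s r := by
    rw [tuttePoly, hrs]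
  have step2 : ∑ A ∈ s.powerset,
      (X 0 - 1) ^ (r (insert e s) - r (insert e A)) *
        (X 1 - 1) ^ ((insert e A).card - r (insert e A))
      = tuttePoly s (ctr r e) := by
    rw [tuttePoly]
    refine Finset.sum_congr rfl (fun A hA => ?_)
    have hAs : A ⊆ s := Finset.mem_powerset.mp hA
    have heA : e ∉ A := fun hx => he (hAs hx)
    have h1 : 1 ≤ r (insert e A) := one_le_r_insert h he1 A
    have h1s : 1 ≤ r (insert e s) := one_le_r_insert h he1 s
    have h2 : (insert e A).card = A.card + 1 := Finset.card_insert_of_notMem heA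
    have h3 : r (insert e A) ≤ r (insert e s) :=
      h.mono (Finset.insert_subset_insert _ hAs)
    have h4 : r (insert e A) ≤ (insert e A).card := h.le_card _
    show _ = (X 0 - 1) ^ (ctr r e s - ctr r e A) * (X 1 - 1) ^ (A.card - ctr r e A)
    simp only [ctr]
    rw [h2] at h4
    rw [show r (insert e s) - r (insert e A)
        = (r (insert e s) - 1) - (r (insert e A) - 1) by omega]
    rw [h2]
    rw [show A.card + 1 - r (insert e A) = A.card - (r (insert e A) - 1) by omega]
  rw [step1, step2]

lemma sum_powerset_single {β : Type*} [AddCommMonoid β] (e : α) (f : Finset α → β) :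
    ∑ A ∈ ({e} : Finset α).powerset, f A = f ∅ + f {e} := by
  have h1 : ({e} : Finset α) = insert e ∅ := by simp
  rw [h1, sum_powerset_insert' (by simp) f, Finset.powerset_empty,
    Finset.sum_singleton, Finset.sum_singleton]

lemma tutte_singleton_coloop (h0 : r ∅ = 0) (hx : r {e} = 1) :
    tuttePoly {e} r = X 0 := by
  rw [tuttePoly, sum_powerset_single]
  simp [h0, hx]

lemma tutte_singleton_loop (h0 : r ∅ = 0) (hx : r {e} = 0) :
    tuttePoly {e} r = X 1 := by
  rw [tuttePoly, sum_powerset_single]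
  simp [h0, hx]







noncomputable def beta (E : Finset α) (r : Finset α → ℕ) : ℤ :=
  eval (fun _ => (0 : ℤ)) (pderiv 0 (tuttePoly E r))

lemma neg_one_pow_sub {k m : ℕ} (h : k ≤ m) :
    (-1 : ℤ) ^ (m - k) = (-1) ^ m * (-1) ^ k := by
  have h2 : (-1 : ℤ) ^ (m - k) * (-1) ^ k = (-1) ^ m := by
    rw [← pow_add, Nat.sub_add_cancel h]
  have h3 : (-1 : ℤ) ^ k * (-1) ^ k = 1 := by
    rw [← pow_add]
    exact Even.neg_one_pow ⟨k, rfl⟩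
  calc (-1 : ℤ) ^ (m - k) = (-1) ^ (m - k) * ((-1) ^ k * (-1) ^ k) := by rw [h3, mul_one]
    _ = ((-1) ^ (m - k) * (-1) ^ k) * (-1) ^ k := by ring
    _ = (-1) ^ m * (-1) ^ k := by rw [h2]

lemma eval0_tutte (h : IsRank r) (hE : E.Nonempty) :
    eval (fun _ => (0 : ℤ)) (tuttePoly E r) = 0 := by
  rw [tuttePoly, map_sum]
  have key : ∀ A ∈ E.powerset,
      eval (fun _ => (0 : ℤ)) ((X 0 - 1) ^ (r E - r A) * (X (σ := Fin 2) 1 - 1) ^ (A.card - r A))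
        = (-1 : ℤ) ^ r E * (-1) ^ A.card := by
    intro A hA
    have hA' : A ⊆ E := Finset.mem_powerset.mp hA
    have h1 : r A ≤ r E := h.mono hA'
    have h2 : r A ≤ A.card := h.le_card A
    rw [map_mul, map_pow, map_pow, map_sub, map_sub, eval_X, eval_X, map_one]
    rw [show (0 : ℤ) - 1 = -1 by ring]
    rw [neg_one_pow_sub h1, neg_one_pow_sub h2]
    have h3 : (-1 : ℤ) ^ r A * (-1) ^ r A = 1 := by
      rw [← pow_add]; exact Even.neg_one_pow ⟨r A, rfl⟩
    calc (-1 : ℤ) ^ r E * (-1) ^ r A * ((-1) ^ A.card * (-1) ^ r A)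
        = ((-1 : ℤ) ^ r E * (-1) ^ A.card) * ((-1) ^ r A * (-1) ^ r A) := by ring
      _ = (-1 : ℤ) ^ r E * (-1) ^ A.card := by rw [h3, mul_one]
  rw [Finset.sum_congr rfl key, ← Finset.mul_sum]
  rw [Finset.sum_powerset_neg_one_pow_card_of_nonempty hE, mul_zero]

lemma eval0_tutte_nonneg (h : IsRank r) :
    0 ≤ eval (fun _ => (0 : ℤ)) (tuttePoly E r) := by
  rcases E.eq_empty_or_nonempty with rfl | hE
  · rw [tutte_empty h, map_one]; norm_num
  · rw [eval0_tutte h hE]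

lemma beta_X0 : eval (fun _ => (0 : ℤ)) (pderiv 0 (X (σ := Fin 2) 0 : MvPolynomial (Fin 2) ℤ)) = 1 := by
  rw [pderiv_X_self, map_one]

lemma beta_X1 : eval (fun _ => (0 : ℤ)) (pderiv 0 (X (σ := Fin 2) 1 : MvPolynomial (Fin 2) ℤ)) = 0 := by
  rw [pderiv_X_of_ne (by norm_num), map_zero]

lemma beta_nonneg_aux : ∀ (n : ℕ) (E : Finset α) (r : Finset α → ℕ),
    E.card = n → IsRank r → 0 ≤ beta E r := by
  intro n
  induction n using Nat.strong_induction_on with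
  | _ n ih =>
    intro E r hcard h
    rcases E.eq_empty_or_nonempty with rfl | hE
    · rw [beta, tutte_empty h]
      simp
    · obtain ⟨e, he⟩ := hE
      set s := E.erase e with hs
      have hes : e ∉ s := Finset.notMem_erase _ _
      have hE' : E = insert e s := (Finset.insert_erase he).symm
      have hscard : s.card = n - 1 := by rw [hs, Finset.card_erase_of_mem he, hcard]
      have hn1 : 1 ≤ n := by
        rw [← hcard]
        exact Finset.card_pos.mpr ⟨e, he⟩
      have hslt : s.card < n := by omega
      have hre : r {e} ≤ 1 := by simpa using h.le_card {e}
      rcases Nat.lt_or_ge (r {e}) 1 with h0 | h1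
      · -- loop
        have h0' : r {e} = 0 := by omega
        rw [beta, hE', tutte_loop h hes h0', pderiv_mul, map_add, map_mul, map_mul,
          pderiv_X_of_ne (by norm_num), map_zero, zero_mul, eval_X]
        simp
      · have h1' : r {e} = 1 := by omega
        have hb1 : r (insert e s) ≤ r {e} + r s := by
          rw [Finset.insert_eq]; exact h.subadd _ _
        have hb2 : r s ≤ r (insert e s) := h.mono (Finset.subset_insert _ _)
        rcases Nat.lt_or_ge (r s) (r (insert e s)) with hco | hord
        · -- coloop
          have hco' : r (insert e s) = r s + 1 := by omega
          rw [beta, hE', tutte_coloop h hes h1' hco', pderiv_mul, map_add, map_mul, map_mul,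
            pderiv_X_self, map_one, one_mul, eval_X]
          have hnn := eval0_tutte_nonneg (E := s) h
          simpa using hnn
        · -- ordinary
          have hord' : r (insert e s) = r s := by omega
          rw [beta, hE', tutte_delContr h hes h1' hord', map_add, map_add]
          have g1 := ih s.card hslt s r rfl h
          have g2 := ih s.card hslt s (ctr r e) rfl (ctr_isRank h h1')
          rw [beta] at g1 g2
          omega

lemma beta_nonneg (h : IsRank r) : 0 ≤ beta E r := beta_nonneg_aux E.card E r rfl h

lemma one_le_beta_aux : ∀ (n : ℕ) (E : Finset α) (r : Finset α → ℕ),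
    E.card = n → IsRank r → NoSep E r → 2 ≤ E.card → 1 ≤ beta E r := by
  intro n
  induction n using Nat.strong_induction_on with
  | _ n ih =>
    intro E r hcard h hns hcard2
    obtain ⟨e, he⟩ : E.Nonempty := Finset.card_pos.mp (by omega)
    obtain ⟨h1, h2⟩ := NoSep.no_loop_coloop h hns hcard2 he
    set s := E.erase e with hs
    have hes : e ∉ s := Finset.notMem_erase _ _
    have hE' : E = insert e s := (Finset.insert_erase he).symm
    have hscard : s.card = E.card - 1 := by rw [hs, Finset.card_erase_of_mem he]
    have hrs : r (insert e s) = r s := by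
      rw [← hE']; exact h2.symm
    rcases Nat.lt_or_ge E.card 3 with hsmall | hbig
    · -- base case : |E| = 2
      have hc2 : E.card = 2 := by omega
      have hs1 : s.card = 1 := by omega
      obtain ⟨f, hf⟩ := Finset.card_eq_one.mp hs1
      have hfE : f ∈ E := by
        have : f ∈ s := by rw [hf]; exact Finset.mem_singleton_self f
        exact Finset.mem_of_mem_erase this
      have hrf : r {f} = 1 := (NoSep.no_loop_coloop h hns hcard2 hfE).1
      have hrE : r E = 1 := by
        rw [← h2, hs, ← hs, hf, hrf]  -- r E = r s = r {f} = 1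
      have hT1 : tuttePoly s r = X 0 := by
        rw [hf]; exact tutte_singleton_coloop h.empty hrf
      have hT2 : tuttePoly s (ctr r e) = X 1 := by
        rw [hf]
        apply tutte_singleton_loop
        · show r (insert e ∅) - 1 = 0
          have : insert e (∅ : Finset α) = {e} := by simp
          rw [this, h1]
        · show r (insert e {f}) - 1 = 0
          have hef : insert e ({f} : Finset α) = E := by rw [← hf, ← hE']
          rw [hef, hrE]
      rw [beta, hE', tutte_delContr h hes h1 hrs, hT1, hT2, map_add, map_add,
        beta_X0, beta_X1]
      norm_num
    · -- inductive step
      have hcard2' : 2 ≤ s.card := by omega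
      have hslt : s.card < n := by omega
      rw [beta, hE', tutte_delContr h hes h1 hrs, map_add, map_add]
      have hnn1 : 0 ≤ beta s r := beta_nonneg h
      have hnn2 : 0 ≤ beta s (ctr r e) := beta_nonneg (ctr_isRank h h1)
      rcases noSep_del_or_ctr h he h1 h2 hns with hc | hc
      · have := ih s.card hslt s r rfl h hc hcard2'
        rw [beta] at this hnn2
        omega
      · have := ih s.card hslt s (ctr r e) rfl (ctr_isRank h h1) hc hcard2'
        rw [beta] at this hnn1
        omega

lemma one_le_beta (h : IsRank r) (hns : NoSep E r) (hcard2 : 2 ≤ E.card) :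
    1 ≤ beta E r := one_le_beta_aux E.card E r rfl h hns hcard2




/-- first projection to a polynomial in `x` -/
noncomputable abbrev PhiX : MvPolynomial (Fin 2) ℤ ≃ₐ[ℤ] Polynomial (MvPolynomial (Fin 1) ℤ) :=
  finSuccEquiv ℤ 1

lemma PhiX_X0 : PhiX (X 0) = Polynomial.X := finSuccEquiv_X_zero

lemma PhiX_X1 : PhiX (X 1) = Polynomial.C (X 0) := by
  have : (1 : Fin 2) = Fin.succ 0 := rfl
  rw [this]
  exact finSuccEquiv_X_succ

/-- swap of the variables -/
noncomputable abbrev swapVars : MvPolynomial (Fin 2) ℤ →ₐ[ℤ] MvPolynomial (Fin 2) ℤ :=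
  rename (Equiv.swap (0 : Fin 2) 1)

lemma PhiX_tutte_eq : PhiX (tuttePoly E r) =
    ∑ A ∈ E.powerset, (Polynomial.X - 1) ^ (r E - r A) *
      Polynomial.C ((X 0 - 1 : MvPolynomial (Fin 1) ℤ) ^ (A.card - r A)) := by
  rw [tuttePoly, map_sum]
  refine Finset.sum_congr rfl (fun A hA => ?_)
  rw [map_mul, map_pow, map_pow, map_sub, map_sub, map_one, PhiX_X0, PhiX_X1]
  rw [map_pow, map_sub, map_one]

lemma swap_tutte_eq : swapVars (tuttePoly E r) =
    ∑ A ∈ E.powerset, (X 1 - 1) ^ (r E - r A) * (X 0 - 1 : MvPolynomial (Fin 2) ℤ) ^ (A.card - r A) := by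
  rw [tuttePoly, map_sum]
  refine Finset.sum_congr rfl (fun A hA => ?_)
  rw [map_mul, map_pow, map_pow, map_sub, map_sub, map_one, rename_X, rename_X]
  rw [Equiv.swap_apply_left, Equiv.swap_apply_right]

lemma PhiX_swap_tutte_eq : PhiX (swapVars (tuttePoly E r)) =
    ∑ A ∈ E.powerset, (Polynomial.X - 1) ^ (A.card - r A) *
      Polynomial.C ((X 0 - 1 : MvPolynomial (Fin 1) ℤ) ^ (r E - r A)) := by
  rw [swap_tutte_eq, map_sum]
  refine Finset.sum_congr rfl (fun A hA => ?_)
  rw [map_mul, map_pow, map_pow, map_sub, map_sub, map_one, PhiX_X0, PhiX_X1]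
  rw [map_pow, map_sub, map_one]
  ring

/-- `(X-1)^k * C c` has degree at most `k`, with equality computations -/
lemma deg_term_le (k : ℕ) (c : MvPolynomial (Fin 1) ℤ) :
    ((Polynomial.X - 1) ^ k * Polynomial.C c).degree ≤ (k : WithBot ℕ) := by
  refine le_trans (Polynomial.degree_mul_le _ _) ?_
  have h1 : ((Polynomial.X - 1 : Polynomial (MvPolynomial (Fin 1) ℤ)) ^ k).degree
      = (k : WithBot ℕ) := by
    have hm : (Polynomial.X - 1 : Polynomial (MvPolynomial (Fin 1) ℤ)).Monic := by
      simpa using Polynomial.monic_X_sub_C (1 : MvPolynomial (Fin 1) ℤ)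
    rw [Polynomial.degree_eq_natDegree (hm.pow k).ne_zero]
    norm_cast
    rw [Polynomial.natDegree_pow]
    have : (Polynomial.X - 1 : Polynomial (MvPolynomial (Fin 1) ℤ)).natDegree = 1 := by
      simpa using Polynomial.natDegree_X_sub_C (1 : MvPolynomial (Fin 1) ℤ)
    rw [this, mul_one]
  rw [h1]
  have h2 := Polynomial.degree_C_le (a := c) (R := MvPolynomial (Fin 1) ℤ)
  calc (k : WithBot ℕ) + (Polynomial.C c).degree ≤ (k : WithBot ℕ) + 0 := by
        exact add_le_add le_rfl h2
    _ = (k : WithBot ℕ) := by rw [add_zero]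

lemma coeff_term_self (k : ℕ) :
    (((Polynomial.X - 1) ^ k * Polynomial.C (1 : MvPolynomial (Fin 1) ℤ)).coeff k)
      = 1 := by
  rw [map_one, mul_one]
  have hm : (Polynomial.X - 1 : Polynomial (MvPolynomial (Fin 1) ℤ)).Monic := by
    simpa using Polynomial.monic_X_sub_C (1 : MvPolynomial (Fin 1) ℤ)
  have h2 : ((Polynomial.X - 1 : Polynomial (MvPolynomial (Fin 1) ℤ)) ^ k).natDegree = k := by
    rw [Polynomial.natDegree_pow]
    have : (Polynomial.X - 1 : Polynomial (MvPolynomial (Fin 1) ℤ)).natDegree = 1 := by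
      simpa using Polynomial.natDegree_X_sub_C (1 : MvPolynomial (Fin 1) ℤ)
    rw [this, mul_one]
  have := (hm.pow k).coeff_natDegree
  rwa [h2] at this

lemma coeff_term_lt {k j : ℕ} (hkj : k < j) (c : MvPolynomial (Fin 1) ℤ) :
    (((Polynomial.X - 1) ^ k * Polynomial.C c).coeff j) = 0 := by
  apply Polynomial.coeff_eq_zero_of_degree_lt
  refine lt_of_le_of_lt (deg_term_le k c) ?_
  exact_mod_cast hkj


lemma PhiX_ne_zero {p : MvPolynomial (Fin 2) ℤ} (hp : p ≠ 0) : PhiX p ≠ 0 := by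
  intro h0
  exact hp (by simpa using PhiX.injective (a₁ := p) (a₂ := 0) (by simpa using h0))

lemma swap_ne_zero {p : MvPolynomial (Fin 2) ℤ} (hp : p ≠ 0) : swapVars p ≠ 0 := by
  intro h0
  apply hp
  have hinj := MvPolynomial.rename_injective (R := ℤ)
    (⇑(Equiv.swap (0 : Fin 2) 1)) (Equiv.injective _)
  exact hinj (by simpa using h0)

lemma phiT_coeff_natDegree (h : IsRank r) (hnl : ∀ x ∈ E, r {x} = 1) :
    (PhiX (tuttePoly E r)).coeff (r E) = 1 ∧ (PhiX (tuttePoly E r)).natDegree = r E := by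
  have hcoeff : (PhiX (tuttePoly E r)).coeff (r E) = 1 := by
    rw [PhiX_tutte_eq, Polynomial.finset_sum_coeff]
    rw [Finset.sum_eq_single_of_mem (∅ : Finset α) (Finset.empty_mem_powerset E)]
    · rw [h.empty, Nat.sub_zero, Finset.card_empty, Nat.sub_zero, pow_zero]
      exact coeff_term_self (r E)
    · intro A hA hAne
      obtain ⟨x, hx⟩ := Finset.nonempty_iff_ne_empty.mpr hAne
      have hxE : x ∈ E := Finset.mem_powerset.mp hA hx
      have h1 : 1 ≤ r A := by
        have := h.mono (Finset.singleton_subset_iff.mpr hx)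
        rw [hnl x hxE] at this
        omega
      have h2 : r A ≤ r E := h.mono (Finset.mem_powerset.mp hA)
      exact coeff_term_lt (by omega) _
  refine ⟨hcoeff, ?_⟩
  have hle : (PhiX (tuttePoly E r)).natDegree ≤ r E := by
    rw [PhiX_tutte_eq]
    apply Polynomial.natDegree_sum_le_of_forall_le
    intro A hA
    have h2 : r E - r A ≤ r E := Nat.sub_le _ _
    have := deg_term_le (r E - r A) ((X 0 - 1 : MvPolynomial (Fin 1) ℤ) ^ (A.card - r A))
    have hdeg : ((Polynomial.X - 1) ^ (r E - r A) *
        Polynomial.C ((X 0 - 1 : MvPolynomial (Fin 1) ℤ) ^ (A.card - r A))).degree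
        ≤ ((r E : ℕ) : WithBot ℕ) := le_trans this (by exact_mod_cast h2)
    exact Polynomial.natDegree_le_iff_degree_le.mpr hdeg
  have hge : r E ≤ (PhiX (tuttePoly E r)).natDegree := by
    apply Polynomial.le_natDegree_of_ne_zero
    rw [hcoeff]
    norm_num
  omega

lemma phiSwapT_coeff_natDegree (h : IsRank r) (hE : E.Nonempty)
    (hnc : ∀ x ∈ E, r (E.erase x) = r E) :
    (PhiX (swapVars (tuttePoly E r))).coeff (E.card - r E) = 1 ∧
      (PhiX (swapVars (tuttePoly E r))).natDegree = E.card - r E := by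
  have hnull : ∀ A ∈ E.powerset, A ≠ E → A.card - r A < E.card - r E := by
    intro A hA hAne
    have hAE : A ⊆ E := Finset.mem_powerset.mp hA
    obtain ⟨x, hxE, hxA⟩ : ∃ x, x ∈ E ∧ x ∉ A := by
      by_contra hcon
      push_neg at hcon
      exact hAne (Finset.Subset.antisymm hAE hcon)
    have hsub : A ⊆ E.erase x := fun y hy =>
      Finset.mem_erase.mpr ⟨fun he => hxA (he ▸ hy), hAE hy⟩
    have hm := h.nullity_mono hsub
    rw [hnc x hxE, Finset.card_erase_of_mem hxE] at hm
    have h1 : r A ≤ A.card := h.le_card A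
    have h2 : 1 ≤ E.card := Finset.card_pos.mpr hE
    have h3 : r E + 0 ≤ 0 + (E.card - 1) := by
      have hm2 := h.nullity_mono (Finset.empty_subset (E.erase x))
      rw [hnc x hxE, Finset.card_erase_of_mem hxE, h.empty, Finset.card_empty] at hm2
      omega
    omega
  have hcoeff : (PhiX (swapVars (tuttePoly E r))).coeff (E.card - r E) = 1 := by
    rw [PhiX_swap_tutte_eq, Polynomial.finset_sum_coeff]
    rw [Finset.sum_eq_single_of_mem E (Finset.mem_powerset_self E)]
    · rw [Nat.sub_self, pow_zero]
      exact coeff_term_self (E.card - r E)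
    · intro A hA hAne
      exact coeff_term_lt (hnull A hA hAne) _
  refine ⟨hcoeff, ?_⟩
  have hle : (PhiX (swapVars (tuttePoly E r))).natDegree ≤ E.card - r E := by
    rw [PhiX_swap_tutte_eq]
    apply Polynomial.natDegree_sum_le_of_forall_le
    intro A hA
    have h2 : A.card - r A ≤ E.card - r E := by
      rcases eq_or_ne A E with rfl | hne
      · exact le_rfl
      · exact le_of_lt (hnull A hA hne)
    have := deg_term_le (A.card - r A) ((X 0 - 1 : MvPolynomial (Fin 1) ℤ) ^ (r E - r A))
    exact Polynomial.natDegree_le_iff_degree_le.mpr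
      (le_trans this (by exact_mod_cast h2))
  have hge : E.card - r E ≤ (PhiX (swapVars (tuttePoly E r))).natDegree := by
    apply Polynomial.le_natDegree_of_ne_zero
    rw [hcoeff]
    norm_num
  omega

lemma degreeOf0_eq (p : MvPolynomial (Fin 2) ℤ) : degreeOf 0 p = (PhiX p).natDegree :=
  (natDegree_finSuccEquiv p).symm

lemma degreeOf1_eq (p : MvPolynomial (Fin 2) ℤ) :
    degreeOf 1 p = (PhiX (swapVars p)).natDegree := by
  rw [natDegree_finSuccEquiv]
  have hkey := degreeOf_rename_of_injective
    (p := p) (f := ⇑(Equiv.swap (0 : Fin 2) 1)) (Equiv.injective _) 1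
  rw [Equiv.swap_apply_right] at hkey
  exact hkey.symm

lemma degreeOf0_mul {f g : MvPolynomial (Fin 2) ℤ} (hf : f ≠ 0) (hg : g ≠ 0) :
    degreeOf 0 (f * g) = degreeOf 0 f + degreeOf 0 g := by
  rw [degreeOf0_eq, degreeOf0_eq, degreeOf0_eq, map_mul,
    Polynomial.natDegree_mul (PhiX_ne_zero hf) (PhiX_ne_zero hg)]

lemma degreeOf1_mul {f g : MvPolynomial (Fin 2) ℤ} (hf : f ≠ 0) (hg : g ≠ 0) :
    degreeOf 1 (f * g) = degreeOf 1 f + degreeOf 1 g := by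
  rw [degreeOf1_eq, degreeOf1_eq, degreeOf1_eq, map_mul, map_mul,
    Polynomial.natDegree_mul (PhiX_ne_zero (swap_ne_zero hf))
      (PhiX_ne_zero (swap_ne_zero hg))]


/-- evaluation of `x,y` at `X, X/(X-1)` in the field of rational functions -/
noncomputable def phi : MvPolynomial (Fin 2) ℤ →+* RatFunc ℚ :=
  eval₂Hom (Int.castRingHom (RatFunc ℚ))
    (fun i => if i = 0 then RatFunc.X else RatFunc.X / (RatFunc.X - 1))

/-- the associated polynomial `(X-1)^m p(X, X/(X-1))` -/
noncomputable def tilde (m : ℕ) (p : MvPolynomial (Fin 2) ℤ) : Polynomial ℚ :=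
  ∑ d ∈ p.support,
    Polynomial.C ((p.coeff d : ℤ) : ℚ) * Polynomial.X ^ (d 0 + d 1) *
      (Polynomial.X - 1) ^ (m - d 1)

lemma RX_sub_one_ne : (RatFunc.X - 1 : RatFunc ℚ) ≠ 0 := by
  intro hcon
  have h1 : (RatFunc.X : RatFunc ℚ) = 1 := by
    have := sub_eq_zero.mp hcon
    exact this
  have h2 : algebraMap (Polynomial ℚ) (RatFunc ℚ) Polynomial.X
      = algebraMap (Polynomial ℚ) (RatFunc ℚ) 1 := by
    rw [RatFunc.algebraMap_X, map_one, h1]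
  have h3 := RatFunc.algebraMap_injective ℚ h2
  have h4 := congrArg Polynomial.natDegree h3
  simp at h4

lemma phi_X0 : phi (X 0) = RatFunc.X := by
  rw [phi, eval₂Hom_X']
  simp

lemma phi_X1 : phi (X 1) = RatFunc.X / (RatFunc.X - 1) := by
  rw [phi, eval₂Hom_X']
  norm_num

lemma prod_fin_two (g : Fin 2 → RatFunc ℚ) (d : Fin 2 →₀ ℕ) :
    (∏ i ∈ d.support, g i ^ d i) = g 0 ^ d 0 * g 1 ^ d 1 := by
  rw [show (∏ i ∈ d.support, g i ^ d i) = d.prod (fun i k => g i ^ k) from rfl]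
  rw [Finsupp.prod_fintype _ _ (fun i => pow_zero _)]
  exact Fin.prod_univ_two _

lemma tilde_spec (m : ℕ) (p : MvPolynomial (Fin 2) ℤ)
    (hm : ∀ d ∈ p.support, d 1 ≤ m) :
    algebraMap (Polynomial ℚ) (RatFunc ℚ) (tilde m p)
      = (RatFunc.X - 1) ^ m * phi p := by
  have hphi : phi p = ∑ d ∈ p.support,
      ((p.coeff d : ℤ) : RatFunc ℚ) * (RatFunc.X ^ d 0 * (RatFunc.X / (RatFunc.X - 1)) ^ d 1) := by
    rw [phi, coe_eval₂Hom, eval₂_eq]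
    refine Finset.sum_congr rfl (fun d hd => ?_)
    rw [prod_fin_two (fun i => if i = 0 then RatFunc.X else RatFunc.X / (RatFunc.X - 1)) d]
    have h0 : (if (0 : Fin 2) = 0 then (RatFunc.X : RatFunc ℚ)
        else RatFunc.X / (RatFunc.X - 1)) = RatFunc.X := if_pos rfl
    have h1 : (if (1 : Fin 2) = 0 then (RatFunc.X : RatFunc ℚ)
        else RatFunc.X / (RatFunc.X - 1)) = RatFunc.X / (RatFunc.X - 1) := if_neg (by decide)
    rw [h0, h1, Int.coe_castRingHom]
  rw [tilde, map_sum, hphi, Finset.mul_sum]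
  refine Finset.sum_congr rfl (fun d hd => ?_)
  rw [map_mul, map_mul, map_pow, map_pow, map_sub,
    map_one (algebraMap (Polynomial ℚ) (RatFunc ℚ)), RatFunc.algebraMap_X,
    RatFunc.algebraMap_C]
  have hcast : RatFunc.C ((p.coeff d : ℤ) : ℚ) = ((p.coeff d : ℤ) : RatFunc ℚ) := by
    rw [map_intCast (RatFunc.C : ℚ →+* RatFunc ℚ)]
  rw [hcast]
  have hd1 : d 1 ≤ m := hm d hd
  set k := m - d 1 with hk
  have hm' : m = k + d 1 := by omega
  rw [hm', div_pow]
  have hpow : ((RatFunc.X - 1 : RatFunc ℚ)) ^ d 1 ≠ 0 := pow_ne_zero _ RX_sub_one_ne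
  have hcc : (RatFunc.X - 1 : RatFunc ℚ) ^ d 1 *
      (RatFunc.X ^ d 1 / (RatFunc.X - 1) ^ d 1) = RatFunc.X ^ d 1 := by
    rw [mul_comm, div_mul_cancel₀ _ hpow]
  rw [pow_add RatFunc.X (d 0) (d 1), pow_add (RatFunc.X - 1) k (d 1)]
  conv_lhs => rw [← hcc]
  ring
lemma phi_tutte {α : Type} [DecidableEq α] (E : Finset α) (r : Finset α → ℕ) :
    phi (tuttePoly E r) = ∑ A ∈ E.powerset,
      (RatFunc.X - 1) ^ (r E - r A) * (1 / (RatFunc.X - 1)) ^ (A.card - r A) := by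
  have hfrac : (RatFunc.X / (RatFunc.X - 1) - 1 : RatFunc ℚ) = 1 / (RatFunc.X - 1) := by
    rw [div_sub_one RX_sub_one_ne]
    rw [show (RatFunc.X - (RatFunc.X - 1) : RatFunc ℚ) = 1 by ring]
  rw [tuttePoly, map_sum]
  refine Finset.sum_congr rfl (fun A hA => ?_)
  rw [map_mul, map_pow, map_pow, map_sub, map_sub, map_one phi, phi_X0, phi_X1, hfrac]

lemma sum_pow_card {α : Type} [DecidableEq α] (E : Finset α) :
    ∑ A ∈ E.powerset, ((Polynomial.X : Polynomial ℚ) - 1) ^ (E.card - A.card)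
      = Polynomial.X ^ E.card := by
  rw [Finset.sum_powerset_apply_card (fun k => ((Polynomial.X : Polynomial ℚ) - 1) ^ (E.card - k))]
  rw [← Finset.sum_range_reflect]
  have hcongr : ∀ j ∈ Finset.range (E.card + 1),
      E.card.choose (E.card + 1 - 1 - j) •
        ((Polynomial.X : Polynomial ℚ) - 1) ^ (E.card - (E.card + 1 - 1 - j))
      = (E.card.choose j : Polynomial ℚ) * ((Polynomial.X : Polynomial ℚ) - 1) ^ j := by
    intro j hj
    have hjn : j ≤ E.card := by
      have := Finset.mem_range.mp hj; omega
    rw [show E.card + 1 - 1 - j = E.card - j by omega]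
    rw [Nat.choose_symm hjn]
    rw [show E.card - (E.card - j) = j by omega]
    rw [nsmul_eq_mul]
  rw [Finset.sum_congr rfl hcongr]
  have hadd := add_pow ((Polynomial.X : Polynomial ℚ) - 1) 1 E.card
  rw [sub_add_cancel] at hadd
  rw [hadd]
  refine Finset.sum_congr rfl (fun j hj => ?_)
  rw [one_pow, mul_one]
  ring

lemma tilde_tutte {α : Type} [DecidableEq α] (E : Finset α) (r : Finset α → ℕ)
    (hρn : r E ≤ E.card)
    (hmono : ∀ A ∈ E.powerset, r A ≤ r E ∧ r A ≤ A.card)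
    (hsup : ∀ d ∈ (tuttePoly E r).support, d 1 ≤ E.card - r E) :
    tilde (E.card - r E) (tuttePoly E r) = Polynomial.X ^ E.card := by
  apply RatFunc.algebraMap_injective ℚ
  rw [tilde_spec _ _ hsup, phi_tutte, Finset.mul_sum]
  have hper : ∀ A ∈ E.powerset,
      (RatFunc.X - 1 : RatFunc ℚ) ^ (E.card - r E) *
        ((RatFunc.X - 1) ^ (r E - r A) * (1 / (RatFunc.X - 1)) ^ (A.card - r A))
      = (RatFunc.X - 1) ^ (E.card - A.card) := by
    intro A hA
    obtain ⟨h1, h2⟩ := hmono A hA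
    have h3 : A.card ≤ E.card := Finset.card_le_card (Finset.mem_powerset.mp hA)
    have e1 : (E.card - r E) + (r E - r A) = (E.card - A.card) + (A.card - r A) := by omega
    calc (RatFunc.X - 1 : RatFunc ℚ) ^ (E.card - r E) *
          ((RatFunc.X - 1) ^ (r E - r A) * (1 / (RatFunc.X - 1)) ^ (A.card - r A))
        = (RatFunc.X - 1 : RatFunc ℚ) ^ ((E.card - r E) + (r E - r A)) *
            (1 / (RatFunc.X - 1)) ^ (A.card - r A) := by rw [pow_add]; ring
      _ = (RatFunc.X - 1 : RatFunc ℚ) ^ ((E.card - A.card) + (A.card - r A)) *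
            (1 / (RatFunc.X - 1)) ^ (A.card - r A) := by rw [e1]
      _ = (RatFunc.X - 1 : RatFunc ℚ) ^ (E.card - A.card) *
            (((RatFunc.X - 1) * (1 / (RatFunc.X - 1))) ^ (A.card - r A)) := by
            rw [pow_add, mul_pow]; ring
      _ = (RatFunc.X - 1 : RatFunc ℚ) ^ (E.card - A.card) := by
            rw [mul_one_div_cancel RX_sub_one_ne, one_pow, mul_one]
  rw [Finset.sum_congr rfl hper]
  rw [show (∑ A ∈ E.powerset, (RatFunc.X - 1 : RatFunc ℚ) ^ (E.card - A.card))
      = algebraMap (Polynomial ℚ) (RatFunc ℚ)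
        (∑ A ∈ E.powerset, ((Polynomial.X : Polynomial ℚ) - 1) ^ (E.card - A.card)) by
    rw [map_sum]
    refine Finset.sum_congr rfl (fun A hA => ?_)
    rw [map_pow, map_sub, map_one (algebraMap (Polynomial ℚ) (RatFunc ℚ)), RatFunc.algebraMap_X]]
  rw [sum_pow_card]

lemma tilde_mul {f g : MvPolynomial (Fin 2) ℤ} (m1 m2 : ℕ)
    (h1 : ∀ d ∈ f.support, d 1 ≤ m1) (h2 : ∀ d ∈ g.support, d 1 ≤ m2)
    (h3 : ∀ d ∈ (f * g).support, d 1 ≤ m1 + m2) :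
    tilde (m1 + m2) (f * g) = tilde m1 f * tilde m2 g := by
  apply RatFunc.algebraMap_injective ℚ
  rw [map_mul, tilde_spec _ _ h1, tilde_spec _ _ h2, tilde_spec _ _ h3, map_mul, pow_add]
  ring

lemma tilde_natDegree_le (m : ℕ) (p : MvPolynomial (Fin 2) ℤ) (a : ℕ)
    (hm : ∀ d ∈ p.support, d 1 ≤ m) (ha : ∀ d ∈ p.support, d 0 ≤ a) :
    (tilde m p).natDegree ≤ a + m := by
  rw [tilde]
  apply Polynomial.natDegree_sum_le_of_forall_le
  intro d hd
  have hd1 := hm d hd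
  have hd0 := ha d hd
  have t1 : (Polynomial.C ((p.coeff d : ℤ) : ℚ) * Polynomial.X ^ (d 0 + d 1)).natDegree
      ≤ d 0 + d 1 := by
    refine le_trans (Polynomial.natDegree_mul_le) ?_
    rw [Polynomial.natDegree_C, Polynomial.natDegree_X_pow]
    omega
  have t2 : (((Polynomial.X : Polynomial ℚ) - 1) ^ (m - d 1)).natDegree ≤ m - d 1 := by
    refine le_trans (Polynomial.natDegree_pow_le) ?_
    have : ((Polynomial.X : Polynomial ℚ) - 1).natDegree = 1 := by
      simpa using Polynomial.natDegree_X_sub_C (1 : ℚ)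
    rw [this, mul_one]
  refine le_trans (Polynomial.natDegree_mul_le) ?_
  omega

lemma fin2_finsupp_eq_zero {d : Fin 2 →₀ ℕ} (h0 : d 0 = 0) (h1 : d 1 = 0) : d = 0 := by
  ext i
  fin_cases i
  · exact h0
  · exact h1

lemma tilde_eval_zero (m : ℕ) (p : MvPolynomial (Fin 2) ℤ) :
    (tilde m p).eval 0 = (-1) ^ m * ((p.coeff 0 : ℤ) : ℚ) := by
  rw [tilde, Polynomial.eval_finset_sum]
  rw [Finset.sum_eq_single (0 : Fin 2 →₀ ℕ)]
  · simp
    ring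
  · intro d hd hne
    have hdd : d 0 + d 1 ≠ 0 := by
      intro hcon
      exact hne (fin2_finsupp_eq_zero (by omega) (by omega))
    rw [Polynomial.eval_mul, Polynomial.eval_mul, Polynomial.eval_pow, Polynomial.eval_X]
    rw [zero_pow hdd]
    ring
  · intro h0
    rw [MvPolynomial.notMem_support_iff.mp h0]
    simp

/-- if a divisor of `X^n` has positive degree, it vanishes at `0` -/
lemma eval_zero_of_dvd_X_pow {P Q : Polynomial ℚ} {n : ℕ}
    (hPQ : P * Q = Polynomial.X ^ n) (hP : 1 ≤ P.natDegree) : P.eval 0 = 0 := by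
  have hdvd : P ∣ (Polynomial.X : Polynomial ℚ) ^ n := ⟨Q, hPQ.symm⟩
  obtain ⟨i, hin, hassoc⟩ := (dvd_prime_pow Polynomial.prime_X n).mp hdvd
  obtain ⟨u, hu⟩ := hassoc
  have hP0 : P ≠ 0 := by
    intro hcon
    rw [hcon, zero_mul] at hPQ
    exact (pow_ne_zero n Polynomial.X_ne_zero) hPQ.symm
  have hudeg : (u : Polynomial ℚ).natDegree = 0 :=
    Polynomial.natDegree_eq_zero_of_isUnit u.isUnit
  have hideg : i = P.natDegree := by
    have h1 := congrArg Polynomial.natDegree hu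
    rw [Polynomial.natDegree_mul hP0 (Units.ne_zero u), hudeg,
      Polynomial.natDegree_X_pow] at h1
    omega
  have hev := congrArg (Polynomial.eval 0) hu
  rw [Polynomial.eval_mul, Polynomial.eval_pow, Polynomial.eval_X] at hev
  rw [zero_pow (by omega : i ≠ 0)] at hev
  have huev : (u : Polynomial ℚ).eval 0 ≠ 0 := by
    obtain ⟨c, hc, hcu⟩ := Polynomial.isUnit_iff.mp u.isUnit
    rw [← hcu, Polynomial.eval_C]
    exact hc.ne_zero
  rcases mul_eq_zero.mp hev with h | h
  · exact h
  · exact absurd h huev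

end TutteAux

open TutteAux in
/-- Brylawski's theorem: the Tutte polynomial of a connected matroid (with at least two
elements) is irreducible in `ℤ[x, y]`.  Here a matroid on the finite ground set `E` is
given by its rank function `r`, satisfying the usual rank axioms. -/
theorem tutte_irreducible_of_connected {α : Type} [DecidableEq α]
    (E : Finset α) (r : Finset α → ℕ)
    (r_empty : r ∅ = 0)
    (r_le_card : ∀ A : Finset α, r A ≤ A.card)
    (r_mono : ∀ A B : Finset α, A ⊆ B → r A ≤ r B)
    (r_submod : ∀ A B : Finset α, r (A ∪ B) + r (A ∩ B) ≤ r A + r B)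
    (hcard : 2 ≤ E.card)
    (hconn : MatroidConnected E r) :
    Irreducible (tuttePoly E r) := by
  have h : IsRank r := ⟨r_empty, r_le_card, fun A B hAB => r_mono A B hAB, r_submod⟩
  have hns : NoSep E r := noSep_of_connected h hconn
  have hnl : ∀ x ∈ E, r {x} = 1 := fun x hx => (NoSep.no_loop_coloop h hns hcard hx).1
  have hnc : ∀ x ∈ E, r (E.erase x) = r E :=
    fun x hx => (NoSep.no_loop_coloop h hns hcard hx).2
  have hEne : E.Nonempty := Finset.card_pos.mp (by omega)
  obtain ⟨e0, he0⟩ := hEne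
  have hρ1 : 1 ≤ r E := by
    have := h.mono (Finset.singleton_subset_iff.mpr he0)
    rw [hnl e0 he0] at this
    omega
  have hρn : r E ≤ E.card := h.le_card E
  obtain ⟨hcT, hdT⟩ := phiT_coeff_natDegree h hnl
  obtain ⟨hcT', hdT'⟩ := phiSwapT_coeff_natDegree h ⟨e0, he0⟩ hnc
  have hdeg0T : degreeOf 0 (tuttePoly E r) = r E := by rw [degreeOf0_eq, hdT]
  have hdeg1T : degreeOf 1 (tuttePoly E r) = E.card - r E := by rw [degreeOf1_eq, hdT']
  have hβ : 1 ≤ beta E r := one_le_beta h hns hcard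
  have hT0 : tuttePoly E r ≠ 0 := by
    intro hcon
    rw [hcon] at hcT
    simp at hcT
  constructor
  · -- not a unit
    intro hu
    have h1 : IsUnit (PhiX (tuttePoly E r)) := hu.map PhiX
    have h2 := Polynomial.natDegree_eq_zero_of_isUnit h1
    rw [hdT] at h2
    omega
  · intro f g hfg
    by_contra hcon
    push_neg at hcon
    obtain ⟨huf, hug⟩ := hcon
    have hf0 : f ≠ 0 := by rintro rfl; rw [zero_mul] at hfg; exact hT0 hfg
    have hg0 : g ≠ 0 := by rintro rfl; rw [mul_zero] at hfg; exact hT0 hfg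
    have ha : degreeOf 0 f + degreeOf 0 g = r E := by
      rw [← degreeOf0_mul hf0 hg0, ← hfg, hdeg0T]
    have hb : degreeOf 1 f + degreeOf 1 g = E.card - r E := by
      rw [← degreeOf1_mul hf0 hg0, ← hfg, hdeg1T]
    -- a nonunit divisor is not constant
    have key : ∀ p q : MvPolynomial (Fin 2) ℤ, tuttePoly E r = p * q → ¬IsUnit p →
        1 ≤ degreeOf 0 p + degreeOf 1 p := by
      intro p q hpq hup
      by_contra hdeg
      push_neg at hdeg
      have hd0 : degreeOf 0 p = 0 := by omega
      have hd1 : degreeOf 1 p = 0 := by omega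
      have hpc : p = MvPolynomial.C (p.coeff 0) := by
        apply MvPolynomial.ext
        intro d
        rw [MvPolynomial.coeff_C]
        by_cases hd : (0 : Fin 2 →₀ ℕ) = d
        · rw [if_pos hd, ← hd]
        · rw [if_neg hd]
          by_contra hne
          have hds : d ∈ p.support := MvPolynomial.mem_support_iff.mpr hne
          have hb0 : d 0 ≤ 0 := degreeOf_le_iff.mp (le_of_eq hd0) d hds
          have hb1 : d 1 ≤ 0 := degreeOf_le_iff.mp (le_of_eq hd1) d hds
          exact hd (fin2_finsupp_eq_zero (by omega) (by omega)).symm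
      set c := p.coeff 0 with hc
      have hcastp : p = ((c : ℤ) : MvPolynomial (Fin 2) ℤ) := by
        rw [hpc, eq_intCast (MvPolynomial.C : ℤ →+* MvPolynomial (Fin 2) ℤ) c]
      have hphiT : PhiX (tuttePoly E r)
          = ((c : ℤ) : Polynomial (MvPolynomial (Fin 1) ℤ)) * PhiX q := by
        rw [hpq, hcastp, map_mul, map_intCast]
      have hcoeq : (1 : MvPolynomial (Fin 1) ℤ)
          = ((c : ℤ) : MvPolynomial (Fin 1) ℤ) * (PhiX q).coeff (r E) := by
        rw [← hcT, hphiT]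
        rw [show ((c : ℤ) : Polynomial (MvPolynomial (Fin 1) ℤ))
            = Polynomial.C ((c : ℤ) : MvPolynomial (Fin 1) ℤ) from
          (map_intCast (Polynomial.C : MvPolynomial (Fin 1) ℤ →+*
            Polynomial (MvPolynomial (Fin 1) ℤ)) c).symm]
        rw [Polynomial.coeff_C_mul]
      have hfin := congrArg (MvPolynomial.constantCoeff) hcoeq
      rw [map_one, map_mul, map_intCast] at hfin
      have hcu : IsUnit c := IsUnit.of_mul_eq_one _ hfin.symm
      exact hup (hpc ▸ hcu.map (MvPolynomial.C : ℤ →+* MvPolynomial (Fin 2) ℤ))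
    have key1 : 1 ≤ degreeOf 0 f + degreeOf 1 f := key f g hfg huf
    have key2 : 1 ≤ degreeOf 0 g + degreeOf 1 g := key g f (by rw [hfg, mul_comm]) hug
    -- the tilde polynomials
    set F := tilde (degreeOf 1 f) f with hF
    set G := tilde (degreeOf 1 g) g with hG
    have hsupf : ∀ d ∈ f.support, d 1 ≤ degreeOf 1 f := degreeOf_le_iff.mp le_rfl
    have hsupg : ∀ d ∈ g.support, d 1 ≤ degreeOf 1 g := degreeOf_le_iff.mp le_rfl
    have hsupfg : ∀ d ∈ (f * g).support, d 1 ≤ degreeOf 1 f + degreeOf 1 g := by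
      have := degreeOf1_mul hf0 hg0
      exact degreeOf_le_iff.mp (le_of_eq this)
    have hXn : F * G = Polynomial.X ^ E.card := by
      rw [hF, hG, ← tilde_mul _ _ hsupf hsupg hsupfg]
      rw [hb, ← hfg]
      exact tilde_tutte E r hρn
        (fun A hA => ⟨h.mono (Finset.mem_powerset.mp hA), h.le_card A⟩)
        (degreeOf_le_iff.mp (le_of_eq hdeg1T))
    have hF0 : F ≠ 0 := by
      intro hcon
      rw [hcon, zero_mul] at hXn
      exact (pow_ne_zero E.card Polynomial.X_ne_zero) hXn.symm
    have hG0 : G ≠ 0 := by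
      intro hcon
      rw [hcon, mul_zero] at hXn
      exact (pow_ne_zero E.card Polynomial.X_ne_zero) hXn.symm
    have hsum : F.natDegree + G.natDegree = E.card := by
      have h1 := congrArg Polynomial.natDegree hXn
      rw [Polynomial.natDegree_mul hF0 hG0, Polynomial.natDegree_X_pow] at h1
      exact h1
    have hdF : F.natDegree ≤ degreeOf 0 f + degreeOf 1 f :=
      tilde_natDegree_le _ _ _ hsupf (degreeOf_le_iff.mp le_rfl)
    have hdG : G.natDegree ≤ degreeOf 0 g + degreeOf 1 g :=
      tilde_natDegree_le _ _ _ hsupg (degreeOf_le_iff.mp le_rfl)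
    have hFpos : 1 ≤ F.natDegree := by omega
    have hGpos : 1 ≤ G.natDegree := by omega
    -- both tilde polynomials vanish at zero
    have hFeval : F.eval 0 = 0 := eval_zero_of_dvd_X_pow hXn hFpos
    have hGeval : G.eval 0 = 0 := eval_zero_of_dvd_X_pow
      (by rw [mul_comm]; exact hXn) hGpos
    have hfconst : f.coeff 0 = 0 := by
      rw [hF, tilde_eval_zero] at hFeval
      have hne : ((-1 : ℚ)) ^ degreeOf 1 f ≠ 0 := pow_ne_zero _ (by norm_num)
      rcases mul_eq_zero.mp hFeval with h' | h'
      · exact absurd h' hne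
      · exact_mod_cast h'
    have hgconst : g.coeff 0 = 0 := by
      rw [hG, tilde_eval_zero] at hGeval
      have hne : ((-1 : ℚ)) ^ degreeOf 1 g ≠ 0 := pow_ne_zero _ (by norm_num)
      rcases mul_eq_zero.mp hGeval with h' | h'
      · exact absurd h' hne
      · exact_mod_cast h'
    -- contradiction with β ≥ 1
    have hfe : eval (fun _ => (0 : ℤ)) f = 0 := by
      rw [eval_zero']
      exact hfconst
    have hge : eval (fun _ => (0 : ℤ)) g = 0 := by
      rw [eval_zero']
      exact hgconst
    have hbeta0 : beta E r = 0 := by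
      rw [beta, hfg, pderiv_mul, map_add, map_mul, map_mul, hfe, hge]
      ring
    omega
end
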